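/- Let B be an admissible linearly topologized commutative ring such that for every ideal of definition I ⊆ B and every n ≥ 1 the closure of I^n in B is an open ideal. Then B is weakly adic; if moreover B arises as the limit of a tower of Noetherian rings B_i with surjective transition maps having nilpotent kernels and B₁ Noetherian, then B is a Noetherian adic ring. -/

import Mathlib

open MvPolynomial


section TopAux
variable {B : Type} [CommRing B] [TopologicalSpace B] [IsTopologicalRing B]

lemma idl_closed_of_open (J : Ideal B) (h : IsOpen (J : Set B)) : IsClosed (J : Set B) := by
  have := AddSubgroup.isClosed_of_isOpen (J.toAddSubgroup) h
  exact this

lemma closure_le_sup (S U : Ideal B) (hU : IsOpen (U : Set B)) :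
    S.topologicalClosure ≤ S ⊔ U := by
  intro a ha
  have ha' : a ∈ closure (S : Set B) := by
    rw [← Submodule.topologicalClosure_coe]; exact ha
  have hopen : IsOpen {y : B | a - y ∈ U} := by
    have : Continuous (fun y : B => a - y) := by continuity
    exact hU.preimage this
  have hmem : a ∈ {y : B | a - y ∈ U} := by simp
  obtain ⟨y, hy1, hy2⟩ := (_root_.mem_closure_iff.1 ha') _ hopen hmem
  have : a = y + (a - y) := by ring
  rw [this]
  exact Submodule.add_mem_sup hy2 hy1

lemma closure_mul_le (I J : Ideal B) :
    I.topologicalClosure * J.topologicalClosure ≤ (I * J).topologicalClosure := by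
  apply Ideal.mul_le.2
  intro r hr s hs
  have hr' : r ∈ closure (I : Set B) := by rw [← Submodule.topologicalClosure_coe]; exact hr
  have hs' : s ∈ closure (J : Set B) := by rw [← Submodule.topologicalClosure_coe]; exact hs
  have hrs : (r, s) ∈ closure ((I : Set B) ×ˢ (J : Set B)) := by
    rw [closure_prod_eq]; exact ⟨hr', hs'⟩
  have hcont : Continuous (fun p : B × B => p.1 * p.2) := continuous_mul
  have himg : r * s ∈ closure ((fun p : B × B => p.1 * p.2) '' ((I : Set B) ×ˢ (J : Set B))) := by
    have := image_closure_subset_closure_image (s := (I : Set B) ×ˢ (J : Set B)) hcont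
    exact this ⟨(r, s), hrs, rfl⟩
  have hsub : (fun p : B × B => p.1 * p.2) '' ((I : Set B) ×ˢ (J : Set B)) ⊆ ((I * J : Ideal B) : Set B) := by
    rintro _ ⟨⟨u, v⟩, ⟨hu, hv⟩, rfl⟩
    exact Ideal.mul_mem_mul hu hv
  have : r * s ∈ closure ((I * J : Ideal B) : Set B) := closure_mono hsub himg
  rw [← Submodule.topologicalClosure_coe] at this
  exact this

lemma le_topologicalClosure' (I : Ideal B) : I ≤ I.topologicalClosure :=
  Submodule.le_topologicalClosure I

end TopAux



section SumAux
variable {B : Type} [CommRing B]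

/-- Successive approximation: if from every element of `S n` we can subtract an
`F (n - n₀)`-combination of the `μ i` to land in `S (n+1)`, and `B` is complete and
separated w.r.t. `F`, then `S 0 ⊆ span (range μ)`. -/
lemma sum_approx {ι : Type} [Fintype ι]
    (F : ℕ → Ideal B)
    (hsep : ∀ b : B, (∀ n, b ∈ F n) → b = 0)
    (hcompl : ∀ a : ℕ → B, (∀ n, a (n + 1) - a n ∈ F n) → ∃ b, ∀ n, b - a n ∈ F n)
    (μ : ι → B) (n₀ : ℕ) (S : ℕ → Set B)
    (hS : ∀ n, ∀ z ∈ S n, z ∈ F (n - n₀))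
    (hstep : ∀ n, ∀ z ∈ S n, ∃ c : ι → B,
      (∀ i, c i ∈ F (n - n₀)) ∧ (z - ∑ i, c i * μ i) ∈ S (n + 1)) :
    ∀ z ∈ S 0, z ∈ Ideal.span (Set.range μ) := by
  intro z hz
  -- build the sequence of approximations
  let T : ∀ n, {y : B // y ∈ S n} := fun n => Nat.rec ⟨z, hz⟩
    (fun n p => ⟨p.1 - ∑ i, (Classical.choose (hstep n p.1 p.2)) i * μ i,
      (Classical.choose_spec (hstep n p.1 p.2)).2⟩) n
  let y : ℕ → B := fun n => (T n).1
  let c : ℕ → ι → B := fun n => Classical.choose (hstep n (y n) (T n).2)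
  have hc : ∀ n i, c n i ∈ F (n - n₀) := fun n i =>
    (Classical.choose_spec (hstep n (y n) (T n).2)).1 i
  have hy0 : y 0 = z := rfl
  have hyS : ∀ n, y n ∈ S n := fun n => (T n).2
  have hystep : ∀ n, y (n + 1) = y n - ∑ i, c n i * μ i := fun n => rfl
  -- partial sums
  let σ : ι → ℕ → B := fun i N => ∑ n ∈ Finset.range N, c n i
  have hyN : ∀ N, y N = z - ∑ i, σ i N * μ i := by
    intro N
    induction N with
    | zero => simp [σ, hy0]
    | succ N ih =>
      rw [hystep N, ih]
      have : ∀ i, σ i (N + 1) = σ i N + c N i := by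
        intro i; simp [σ, Finset.sum_range_succ]
      simp only [this, add_mul, Finset.sum_add_distrib]
      ring
  -- limits of the coefficient sequences
  have hlim : ∀ i : ι, ∃ b : B, ∀ N, b - σ i (N + n₀) ∈ F N := by
    intro i
    apply hcompl (fun N => σ i (N + n₀))
    intro n
    have : σ i (n + 1 + n₀) - σ i (n + n₀) = c (n + n₀) i := by
      have : n + 1 + n₀ = (n + n₀) + 1 := by omega
      rw [this]
      simp [σ, Finset.sum_range_succ]
    rw [this]
    have := hc (n + n₀) i
    rwa [Nat.add_sub_cancel] at this
  choose chat hchat using hlim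
  -- the limit identity
  have key : ∀ M, z - ∑ i, chat i * μ i ∈ F M := by
    intro M
    have h1 : z - ∑ i, σ i (M + n₀) * μ i = y (M + n₀) := (hyN (M + n₀)).symm
    have h2 : z - ∑ i, chat i * μ i
        = y (M + n₀) - ∑ i, (chat i - σ i (M + n₀)) * μ i := by
      rw [← h1]
      simp only [sub_mul, Finset.sum_sub_distrib]
      ring
    rw [h2]
    apply Submodule.sub_mem
    · have := hS (M + n₀) (y (M + n₀)) (hyS (M + n₀))
      rwa [Nat.add_sub_cancel] at this
    · apply Submodule.sum_mem
      intro i _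
      exact Ideal.mul_mem_right _ _ (hchat i M)
  have : z - ∑ i, chat i * μ i = 0 := hsep _ key
  have hz' : z = ∑ i, chat i * μ i := by
    have := sub_eq_zero.mp this
    exact this
  rw [hz']
  apply Submodule.sum_mem
  intro i _
  exact Ideal.mul_mem_left _ _ (Submodule.subset_span ⟨i, rfl⟩)

end SumAux



section WordsAux
variable {B : Type} [CommRing B]

lemma word_mem_pow {r : ℕ} (x : Fin r → B) (n : ℕ) (w : Fin n → Fin r) :
    (∏ j, x (w j)) ∈ (Ideal.span (Set.range x)) ^ n := by
  induction n with
  | zero => simp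
  | succ n ih =>
    rw [Fin.prod_univ_castSucc, pow_succ]
    exact Ideal.mul_mem_mul (ih _) (Submodule.subset_span ⟨w (Fin.last n), rfl⟩)

lemma pow_eq_span_words {r : ℕ} (x : Fin r → B) (n : ℕ) :
    (Ideal.span (Set.range x)) ^ n
      = Ideal.span (Set.range (fun w : Fin n → Fin r => ∏ j, x (w j))) := by
  induction n with
  | zero =>
    simp only [pow_zero, Ideal.one_eq_top]
    have : (Set.range (fun w : Fin 0 → Fin r => ∏ j, x (w j))) = {1} := by
      haveI : Nonempty (Fin 0 → Fin r) := ⟨Fin.elim0⟩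
      rw [show (fun w : Fin 0 → Fin r => ∏ j, x (w j)) = fun _ => (1 : B) by
        funext w; simp]
      exact Set.range_const
    rw [this, Ideal.span_singleton_one]
  | succ n ih =>
    rw [pow_succ, ih, Ideal.span_mul_span']
    congr 1
    ext a
    constructor
    · rintro ⟨u, ⟨w, rfl⟩, v, ⟨i, rfl⟩, rfl⟩
      refine ⟨Fin.snoc w i, ?_⟩
      change (∏ j : Fin (n + 1), x ((Fin.snoc w i : Fin (n + 1) → Fin r) j)) = (∏ j : Fin n, x (w j)) * x i
      rw [Fin.prod_univ_castSucc]
      simp [Fin.snoc_castSucc]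
    · rintro ⟨w', rfl⟩
      refine ⟨∏ j : Fin n, x (w' j.castSucc), ⟨fun j : Fin n => w' j.castSucc, rfl⟩,
        x (w' (Fin.last n)), ⟨w' (Fin.last n), rfl⟩, ?_⟩
      change (∏ j : Fin n, x (w' j.castSucc)) * x (w' (Fin.last n)) = ∏ j : Fin (n + 1), x (w' j)
      rw [Fin.prod_univ_castSucc]

lemma prod_pow_mem_pow {ι : Type*} (I : Ideal B) (s : Finset ι) (e : ι → ℕ) (y : ι → B)
    (hy : ∀ i ∈ s, y i ∈ I) : (∏ i ∈ s, y i ^ e i) ∈ I ^ (∑ i ∈ s, e i) := by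
  classical
  induction s using Finset.induction_on with
  | empty => simp
  | insert j s' hnot ih =>
    rw [Finset.prod_insert hnot, Finset.sum_insert hnot, pow_add]
    exact Ideal.mul_mem_mul (Ideal.pow_mem_pow (hy j (Finset.mem_insert_self j s')) _)
      (ih (fun i hi => hy i (Finset.mem_insert_of_mem hi)))

end WordsAux





section PolyAux
variable {B : Type} [CommRing B] {r : ℕ}

lemma degree_eq_weight (d : Fin r →₀ ℕ) : (Finsupp.weight 1) d = d.degree := by
  rw [Finsupp.degree_eq_weight_one]
  rfl

lemma eval_mem_mul_pow (x : Fin r → B) (K : Ideal B) (n : ℕ) (p : MvPolynomial (Fin r) B)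
    (hp : p.IsHomogeneous n) (hco : ∀ u, MvPolynomial.coeff u p ∈ K) :
    MvPolynomial.eval x p ∈ K * (Ideal.span (Set.range x)) ^ n := by
  have hps : MvPolynomial.eval x p
      = ∑ v ∈ p.support, MvPolynomial.eval x ((monomial v) (MvPolynomial.coeff v p)) := by
    conv_lhs => rw [p.as_sum]
    rw [map_sum]
  rw [hps]
  apply Submodule.sum_mem
  intro v hv
  rw [eval_monomial]
  apply Ideal.mul_mem_mul (hco v)
  have hdeg : v.degree = n := by
    rw [← degree_eq_weight]
    exact hp (mem_support_iff.1 hv)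
  have : (v.prod fun i e => x i ^ e) = ∏ i ∈ v.support, x i ^ v i := rfl
  rw [this, ← hdeg]
  have : v.degree = ∑ i ∈ v.support, v i := rfl
  rw [this]
  exact prod_pow_mem_pow _ _ _ _ (fun i _ => Submodule.subset_span ⟨i, rfl⟩)

lemma exists_homog_eval (x : Fin r → B) :
    ∀ n (y : B), y ∈ (Ideal.span (Set.range x)) ^ n →
      ∃ p : MvPolynomial (Fin r) B, p.IsHomogeneous n ∧ MvPolynomial.eval x p = y := by
  intro n
  induction n with
  | zero =>
    intro y _
    exact ⟨MvPolynomial.C y, isHomogeneous_C _ _, by simp⟩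
  | succ n ih =>
    intro y hy
    rw [pow_succ] at hy
    refine Submodule.mul_induction_on hy ?_ ?_
    · intro a ha b hb
      obtain ⟨pa, hpa, hevala⟩ := ih a ha
      obtain ⟨c, hc⟩ := (Submodule.mem_span_range_iff_exists_fun B).1 hb
      refine ⟨pa * (∑ i, MvPolynomial.C (c i) * MvPolynomial.X i), ?_, ?_⟩
      · apply hpa.mul
        have : (∑ i, MvPolynomial.C (c i) * MvPolynomial.X i)
            ∈ homogeneousSubmodule (Fin r) B 1 := by
          apply Submodule.sum_mem
          intro i _
          rw [mem_homogeneousSubmodule]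
          have := (isHomogeneous_C (Fin r) (c i)).mul (isHomogeneous_X B i)
          simpa using this
        exact (mem_homogeneousSubmodule _ _).1 this
      · rw [map_mul, hevala, map_sum]
        simp only [map_mul, eval_C, eval_X]
        rw [← hc]
        simp [smul_eq_mul]
    · rintro p q ⟨pp, hpp, hep⟩ ⟨pq, hpq, heq⟩
      exact ⟨pp + pq, hpp.add hpq, by rw [map_add, hep, heq]⟩

lemma homogComp_mul_homog {R : Type} [CommRing R] (q e : MvPolynomial (Fin r) R) (m n : ℕ)
    (he : e.IsHomogeneous m) :
    homogeneousComponent n (q * e)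
      = if m ≤ n then homogeneousComponent (n - m) q * e else 0 := by
  induction q using MvPolynomial.induction_on' with
  | monomial u c =>
    have hqe : ((monomial u) c * e).IsHomogeneous (u.degree + m) :=
      (isHomogeneous_monomial c rfl).mul he
    rw [homogeneousComponent_of_mem ((mem_homogeneousSubmodule _ _).2 hqe),
      homogeneousComponent_of_mem ((mem_homogeneousSubmodule _ _).2
        (isHomogeneous_monomial (n := u.degree) c rfl))]
    by_cases hmn : m ≤ n
    · rw [if_pos hmn]
      by_cases h : n = u.degree + m
      · rw [if_pos h, if_pos (by omega)]
      · rw [if_neg h, if_neg (by omega), zero_mul]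
    · rw [if_neg hmn, if_neg (by omega)]
  | add p q hp hq =>
    rw [add_mul, map_add, hp, hq, map_add]
    split_ifs
    · rw [add_mul]
    · rw [add_zero]

lemma exists_homog_lift (I : Ideal B) (n : ℕ) (h : MvPolynomial (Fin r) (B ⧸ I))
    (hh : h.IsHomogeneous n) :
    ∃ q : MvPolynomial (Fin r) B, q.IsHomogeneous n ∧
      MvPolynomial.map (Ideal.Quotient.mk I) q = h := by
  refine ⟨∑ u ∈ h.support, monomial u (Function.surjInv Ideal.Quotient.mk_surjective
    (MvPolynomial.coeff u h)), ?_, ?_⟩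
  · have : ∀ u ∈ h.support, ((monomial u) (Function.surjInv Ideal.Quotient.mk_surjective
        (MvPolynomial.coeff u h))) ∈ homogeneousSubmodule (Fin r) B n := by
      intro u hu
      rw [mem_homogeneousSubmodule]
      apply isHomogeneous_monomial
      rw [← degree_eq_weight]
      exact hh (mem_support_iff.1 hu)
    exact (mem_homogeneousSubmodule _ _).1 (Submodule.sum_mem _ this)
  · rw [map_sum]
    simp only [map_monomial, Function.surjInv_eq]
    exact h.support_sum_monomial_coeff

end PolyAux




section NOETH
variable {B : Type} [CommRing B]

theorem noeth_of_complete {r : ℕ} (x : Fin r → B) (F : ℕ → Ideal B)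
    (hnoeth : IsNoetherianRing (B ⧸ Ideal.span (Set.range x)))
    (hIF : ∀ n, (Ideal.span (Set.range x)) ^ n ≤ F n)
    (hsep : ∀ b : B, (∀ n, b ∈ F n) → b = 0)
    (hcompl : ∀ a : ℕ → B, (∀ n, a (n + 1) - a n ∈ F n) → ∃ b, ∀ n, b - a n ∈ F n) :
    IsNoetherianRing B := by
  set I : Ideal B := Ideal.span (Set.range x) with hIdef
  rw [isNoetherianRing_iff_ideal_fg]
  intro M
  set π : MvPolynomial (Fin r) B →+* MvPolynomial (Fin r) (B ⧸ I) :=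
    MvPolynomial.map (Ideal.Quotient.mk I) with hπdef
  set SetE : ℕ → Set (MvPolynomial (Fin r) B) := fun n =>
    {p | p.IsHomogeneous n ∧ MvPolynomial.eval x p ∈ (M ⊓ I ^ n ⊔ I ^ (n + 1) : Ideal B)}
    with hSetE
  set S : Set (MvPolynomial (Fin r) (B ⧸ I)) := ⋃ n, π '' SetE n with hSdef
  haveI := hnoeth
  haveI : IsNoetherianRing (MvPolynomial (Fin r) (B ⧸ I)) := inferInstance
  have hAfg : (Ideal.span S).FG :=
    (isNoetherianRing_iff_ideal_fg (MvPolynomial (Fin r) (B ⧸ I))).1 inferInstance _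
  obtain ⟨T0, hT0⟩ := hAfg
  have hTt : ∀ t : {t // t ∈ T0}, ∃ Tt : Finset (MvPolynomial (Fin r) (B ⧸ I)),
      ↑Tt ⊆ S ∧ (t : MvPolynomial (Fin r) (B ⧸ I)) ∈ Ideal.span (Tt : Set _) := by
    intro t
    have : (t : MvPolynomial (Fin r) (B ⧸ I)) ∈ Ideal.span S := by
      rw [← hT0]; exact Ideal.subset_span t.2
    exact Submodule.mem_span_finite_of_mem_span this
  choose Tt hTtsub hTtmem using hTt
  classical
  set T : Finset (MvPolynomial (Fin r) (B ⧸ I)) := Finset.univ.biUnion Tt with hTdef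
  have hTS : (T : Set _) ⊆ S := by
    intro t ht
    rw [hTdef] at ht
    simp only [Finset.coe_biUnion, Set.mem_iUnion, Finset.mem_coe] at ht
    obtain ⟨i, _, hi⟩ := ht
    exact hTtsub i hi
  have hspanT : Ideal.span (T : Set _) = Ideal.span S := by
    apply le_antisymm
    · exact Ideal.span_mono hTS
    · rw [← hT0]
      apply Ideal.span_le.2
      intro t ht
      refine SetLike.le_def.1 (Ideal.span_mono ?_) (hTtmem ⟨t, ht⟩)
      intro u hu
      rw [hTdef]
      simp only [Finset.coe_biUnion, Set.mem_iUnion, Finset.mem_coe]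
      exact ⟨⟨t, ht⟩, Finset.mem_univ _, hu⟩
  -- index the generators
  set ι := {t : MvPolynomial (Fin r) (B ⧸ I) // t ∈ T} with hι
  have hgen : ∀ i : ι, ∃ (mi : ℕ) (ei : MvPolynomial (Fin r) B),
      ei ∈ SetE mi ∧ π ei = (i : MvPolynomial (Fin r) (B ⧸ I)) := by
    intro i
    have := hTS i.2
    rw [hSdef] at this
    simp only [Set.mem_iUnion, Set.mem_image] at this
    obtain ⟨n, p, hp, hpi⟩ := this
    exact ⟨n, p, hp, hpi⟩
  choose m e he hπe using hgen
  have hμ : ∀ i : ι, ∃ μi ∈ (M ⊓ I ^ (m i) : Ideal B), ∃ δi ∈ (I ^ (m i + 1) : Ideal B),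
      μi + δi = MvPolynomial.eval x (e i) := by
    intro i
    have := (he i).2
    exact Submodule.mem_sup.1 this
  choose μ hμM δ hδ hμδ using hμ
  set n₀ : ℕ := Finset.univ.sup m with hn₀
  have hmn₀ : ∀ i, m i ≤ n₀ := fun i => Finset.le_sup (Finset.mem_univ i)
  -- the approximation step
  have hstep : ∀ n, ∀ z ∈ ((M ⊓ I ^ n : Ideal B) : Set B), ∃ c : ι → B,
      (∀ i, c i ∈ F (n - n₀)) ∧
      (z - ∑ i, c i * μ i) ∈ ((M ⊓ I ^ (n + 1) : Ideal B) : Set B) := by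
    intro n z hz
    obtain ⟨hzM, hzI⟩ := hz
    obtain ⟨p, hphom, hpeval⟩ := exists_homog_eval x n z hzI
    have hpE : p ∈ SetE n := ⟨hphom, by rw [hpeval]; exact Submodule.mem_sup_left ⟨hzM, hzI⟩⟩
    have hπp : π p ∈ Ideal.span ((T : Set (MvPolynomial (Fin r) (B ⧸ I)))) := by
      rw [hspanT, ← hT0, hT0]
      apply Ideal.subset_span
      rw [hSdef]
      exact Set.mem_iUnion.2 ⟨n, Set.mem_image_of_mem _ hpE⟩
    have hrange : (T : Set (MvPolynomial (Fin r) (B ⧸ I)))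
        = Set.range (fun i : ι => (i : MvPolynomial (Fin r) (B ⧸ I))) := by
      ext u
      constructor
      · intro h
        exact ⟨(⟨u, h⟩ : ι), rfl⟩
      · rintro ⟨y, rfl⟩
        exact y.2
    rw [hrange] at hπp
    obtain ⟨q, hq⟩ := (Submodule.mem_span_range_iff_exists_fun _).1 hπp
    -- take degree-n homogeneous components
    have hπphom : (π p).IsHomogeneous n := hphom.map _
    have hcomp : π p = ∑ i : ι, (if m i ≤ n
        then homogeneousComponent (n - m i) (q i) * π (e i) else 0) := by
      have h1 : homogeneousComponent n (π p) = π p := by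
        rw [homogeneousComponent_of_mem ((mem_homogeneousSubmodule _ _).2 hπphom), if_pos rfl]
      conv_lhs => rw [← h1, ← hq]
      rw [map_sum]
      apply Finset.sum_congr rfl
      intro i _
      rw [smul_eq_mul]
      have hei : ((i : MvPolynomial (Fin r) (B ⧸ I))).IsHomogeneous (m i) := by
        rw [← hπe i]; exact (he i).1.map _
      rw [← hπe i] at hei ⊢
      exact homogComp_mul_homog (q i) (π (e i)) (m i) n hei
    -- lift the coefficients
    have hlift : ∀ i : ι, ∃ q' : MvPolynomial (Fin r) B, q'.IsHomogeneous (n - m i) ∧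
        π q' = (if m i ≤ n then homogeneousComponent (n - m i) (q i) else 0) ∧
        (¬ m i ≤ n → q' = 0) := by
      intro i
      by_cases h : m i ≤ n
      · obtain ⟨q', h1, h2⟩ := exists_homog_lift I (n - m i)
          (homogeneousComponent (n - m i) (q i))
          (homogeneousComponent_isHomogeneous _ _)
        exact ⟨q', h1, by rw [if_pos h]; exact h2, fun hc => absurd h hc⟩
      · exact ⟨0, isHomogeneous_zero _ _ _, by rw [if_neg h]; simp [hπdef], fun _ => rfl⟩
    choose q' hq'hom hπq' hq'zero using hlift
    set w : MvPolynomial (Fin r) B := p - ∑ i : ι, q' i * e i with hwdef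
    have hπw : π w = 0 := by
      rw [hwdef, map_sub, map_sum, hcomp]
      rw [sub_eq_zero]
      apply Finset.sum_congr rfl
      intro i _
      rw [map_mul, hπq' i]
      by_cases h : m i ≤ n
      · rw [if_pos h, if_pos h]
      · rw [if_neg h, if_neg h, zero_mul]
    have hwcoeff : ∀ u, MvPolynomial.coeff u w ∈ I := by
      intro u
      have : MvPolynomial.coeff u (π w) = 0 := by rw [hπw]; simp
      rw [hπdef, MvPolynomial.coeff_map] at this
      exact Ideal.Quotient.eq_zero_iff_mem.1 this
    have hwhom : w.IsHomogeneous n := by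
      rw [← mem_homogeneousSubmodule]
      apply Submodule.sub_mem
      · exact (mem_homogeneousSubmodule _ _).2 hphom
      · apply Submodule.sum_mem
        intro i _
        by_cases h : m i ≤ n
        · rw [mem_homogeneousSubmodule]
          have := (hq'hom i).mul (he i).1
          rwa [Nat.sub_add_cancel h] at this
        · rw [hq'zero i h, zero_mul]
          exact Submodule.zero_mem _
    -- the coefficients
    refine ⟨fun i => MvPolynomial.eval x (q' i), ?_, ?_, ?_⟩
    · intro i
      have h1 : MvPolynomial.eval x (q' i) ∈ I ^ (n - m i) := by
        have := eval_mem_mul_pow x ⊤ (n - m i) (q' i) (hq'hom i) (fun u => trivial)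
        rwa [Ideal.top_mul, ← hIdef] at this
      have h2 : (I : Ideal B) ^ (n - m i) ≤ I ^ (n - n₀) :=
        Ideal.pow_le_pow_right (by have := hmn₀ i; omega)
      exact hIF (n - n₀) (h2 h1)
    · apply Submodule.sub_mem _ hzM
      apply Submodule.sum_mem
      intro i _
      exact Ideal.mul_mem_left _ _ (hμM i).1
    · -- membership in I ^ (n + 1)
      have hzz : z - ∑ i : ι, (MvPolynomial.eval x (q' i)) * μ i
          = MvPolynomial.eval x w + ∑ i : ι, (MvPolynomial.eval x (q' i)) * δ i := by
        have hpw : p = w + ∑ i : ι, q' i * e i := by rw [hwdef]; ring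
        have : z = MvPolynomial.eval x w + ∑ i : ι, (MvPolynomial.eval x (q' i))
            * (μ i + δ i) := by
          rw [← hpeval, hpw, map_add, map_sum]
          congr 1
          apply Finset.sum_congr rfl
          intro i _
          rw [map_mul, hμδ i]
        rw [this]
        simp only [mul_add, Finset.sum_add_distrib]
        ring
      rw [hzz]
      apply Submodule.add_mem
      · have := eval_mem_mul_pow x I n w hwhom hwcoeff
        rwa [← hIdef, ← pow_succ'] at this
      · apply Submodule.sum_mem
        intro i _
        have h1 : MvPolynomial.eval x (q' i) ∈ I ^ (n - m i) := by
          have := eval_mem_mul_pow x ⊤ (n - m i) (q' i) (hq'hom i) (fun u => trivial)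
          rwa [Ideal.top_mul, ← hIdef] at this
        have h2 : (MvPolynomial.eval x (q' i)) * δ i ∈ I ^ (n - m i) * I ^ (m i + 1) :=
          Ideal.mul_mem_mul h1 (hδ i)
        rw [← pow_add] at h2
        exact Ideal.pow_le_pow_right (by omega) h2
  -- conclude via successive approximation
  have happrox := sum_approx F hsep hcompl μ n₀ (fun n => ((M ⊓ I ^ n : Ideal B) : Set B))
    (fun n z hz => by
      have h1 : (I : Ideal B) ^ n ≤ I ^ (n - n₀) := Ideal.pow_le_pow_right (by omega)
      exact hIF (n - n₀) (h1 hz.2))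
    hstep
  have hMeq : M = Ideal.span (Set.range μ) := by
    apply le_antisymm
    · intro z hz
      exact happrox z ⟨hz, by simp⟩
    · rw [Ideal.span_le]
      rintro _ ⟨i, rfl⟩
      exact (hμM i).1
  rw [hMeq]
  exact Submodule.fg_span (Set.finite_range μ)

end NOETH



section Tower
variable {C : ℕ → Type} [instC : ∀ k, CommRing (C k)]

/-- cast ring hom between equal indices -/
def cc : ∀ {a b : ℕ}, a = b → C a →+* C b
  | _, _, rfl => RingHom.id _

variable (g : ∀ k, C (k + 1) →+* C k)

/-- composite downward transition maps -/
def dn (i : ℕ) : ∀ n, C (i + n) →+* C i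
  | 0 => RingHom.id (C i)
  | (n + 1) => (dn i n).comp (g (i + n))

lemma ccg (a b : ℕ) (hab : a = b) (h : a + 1 = b + 1) (y : C (a + 1)) :
    g b (cc h y) = cc hab (g a y) := by
  subst hab
  rfl

lemma ccc {a b c : ℕ} (h1 : a = b) (h2 : b = c) (y : C a) :
    cc h2 (cc h1 y) = cc (h1.trans h2) y := by
  subst h1; subst h2; rfl

lemma dns : ∀ (n i : ℕ) (h : i + (n + 1) = (i + 1) + n) (y : C (i + (n + 1))),
    dn g i (n + 1) y = g i (dn g (i + 1) n (cc h y)) := by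
  intro n
  induction n with
  | zero =>
    intro i h y
    rfl
  | succ n ih =>
    intro i h y
    have L : dn g i (n + 2) y = dn g i (n + 1) (g (i + (n + 1)) y) := rfl
    rw [L, ih i (by omega) (g (i + (n + 1)) y)]
    congr 1
    have R : dn g (i + 1) (n + 1) (cc h y) = dn g (i + 1) n (g ((i + 1) + n) (cc h y)) := rfl
    rw [R]
    congr 1
    exact (ccg g (i + (n + 1)) ((i + 1) + n) (by omega) h y).symm

lemma exists_tower_lift (hg : ∀ k, Function.Surjective (g k)) (k : ℕ) (c : C k) :
    ∃ x : ∀ j, C j, (∀ j, g j (x (j + 1)) = x j) ∧ x k = c := by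
  let up : ∀ n, C (k + n) := fun n =>
    Nat.rec (motive := fun n => C (k + n)) c (fun n z => Function.surjInv (hg (k + n)) z) n
  have hup : ∀ n, g (k + n) (up (n + 1)) = up n := fun n => Function.surjInv_eq _ _
  let x : ∀ j, C j := fun j => dn g j k (cc (Nat.add_comm k j) (up j))
  refine ⟨x, ?_, ?_⟩
  · intro j
    have h1 : g j (x (j + 1)) = dn g j (k + 1) (cc (by omega : k + (j + 1) = j + (k + 1)) (up (j + 1))) := by
      rw [dns g k j (by omega) (cc (by omega : k + (j + 1) = j + (k + 1)) (up (j + 1)))]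
      show g j (dn g (j + 1) k _) = g j (dn g (j + 1) k _)
      congr 1
      rw [ccc]
    rw [h1]
    have h2 : dn g j (k + 1) (cc (by omega : k + (j + 1) = j + (k + 1)) (up (j + 1)))
        = dn g j k (g (j + k) (cc (by omega : k + (j + 1) = j + (k + 1)) (up (j + 1)))) := rfl
    rw [h2]
    have h3 : g (j + k) (cc (by omega : k + (j + 1) = j + (k + 1)) (up (j + 1)))
        = cc (Nat.add_comm k j) (g (k + j) (up (j + 1))) :=
      ccg g (k + j) (j + k) (Nat.add_comm k j) _ _
    rw [h3, hup j]
  · show dn g k k (cc (Nat.add_comm k k) (up k)) = c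
    have h0 : cc (Nat.add_comm k k) (up k) = up k := rfl
    rw [h0]
    have : ∀ n, dn g k n (up n) = c := by
      intro n
      induction n with
      | zero => rfl
      | succ n ih =>
        have : dn g k (n + 1) (up (n + 1)) = dn g k n (g (k + n) (up (n + 1))) := rfl
        rw [this, hup, ih]
    exact this k

end Tower


theorem statement_16 (B : Type) [CommRing B] [TopologicalSpace B] [IsTopologicalRing B]
    -- `B` is linearly topologized:
    (hlin : ∀ s ∈ nhds (0 : B), ∃ J : Ideal B, IsOpen (J : Set B) ∧ (J : Set B) ⊆ s)
    -- `B` has an ideal of definition: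
    (hIoD : ∃ I : Ideal B, IsOpen (I : Set B) ∧
      ∀ s ∈ nhds (0 : B), ∃ n : ℕ, ((I ^ n : Ideal B) : Set B) ⊆ s)
    -- the closure of every power of every ideal of definition is open:
    (hclos : ∀ I : Ideal B, IsOpen (I : Set B) →
      (∀ s ∈ nhds (0 : B), ∃ n : ℕ, ((I ^ n : Ideal B) : Set B) ⊆ s) →
      ∀ n : ℕ, IsOpen (closure ((I ^ n : Ideal B) : Set B))) :
    -- `B` is weakly adic:
    (∃ I : Ideal B, IsOpen (I : Set B) ∧
      (∀ n : ℕ, IsOpen (closure ((I ^ n : Ideal B) : Set B))) ∧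
      ∀ s ∈ nhds (0 : B), ∃ n : ℕ, closure ((I ^ n : Ideal B) : Set B) ⊆ s) ∧
    -- if moreover `B` is the limit of a tower of Noetherian rings with surjective
    -- transition maps having nilpotent kernels, then `B` is a Noetherian adic ring:
    (∀ (C : ℕ → Type) (_ : ∀ k, CommRing (C k)),
      (∀ k, IsNoetherianRing (C k)) →
      ∀ (g : ∀ k, C (k + 1) →+* C k),
      (∀ k, Function.Surjective (g k)) →
      (∀ k, IsNilpotent (RingHom.ker (g k))) →
      ∀ (f : ∀ k, B →+* C k) (hcompat : ∀ k, (g k).comp (f (k + 1)) = f k),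
      Function.Bijective (fun b : B =>
        (⟨fun k => f k b, fun k => DFunLike.congr_fun (hcompat k) b⟩ :
          {x : ∀ k, C k // ∀ k, g k (x (k + 1)) = x k})) →
      (∀ k, IsOpen ((RingHom.ker (f k) : Ideal B) : Set B)) →
      (∀ s ∈ nhds (0 : B), ∃ k, ((RingHom.ker (f k) : Ideal B) : Set B) ⊆ s) →
      IsNoetherianRing B ∧ ∃ I : Ideal B, IsAdic I) := by
  have hcl_cof : ∀ I : Ideal B, (∀ s ∈ nhds (0 : B), ∃ n, ((I ^ n : Ideal B) : Set B) ⊆ s) →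
      ∀ s ∈ nhds (0 : B), ∃ n, closure ((I ^ n : Ideal B) : Set B) ⊆ s := by
    intro I hpow s hs
    obtain ⟨J, hJopen, hJs⟩ := hlin s hs
    obtain ⟨n, hn⟩ := hpow (J : Set B) (hJopen.mem_nhds J.zero_mem)
    refine ⟨n, le_trans ?_ hJs⟩
    exact (IsClosed.closure_subset_iff (idl_closed_of_open J hJopen)).2 hn
  constructor
  · obtain ⟨I, hIopen, hIpow⟩ := hIoD
    exact ⟨I, hIopen, hclos I hIopen hIpow, hcl_cof I hIpow⟩
  intro C instC hCnoeth g hg hgnil f hcompat hbij hker_open hker_cof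
  -- surjectivity of the projections
  have hsurj : ∀ k, Function.Surjective (f k) := by
    intro k c
    obtain ⟨xx, hxx, hxxk⟩ := exists_tower_lift (instC := instC) g hg k c
    obtain ⟨b, hb⟩ := hbij.2 ⟨xx, hxx⟩
    refine ⟨b, ?_⟩
    have := congrArg Subtype.val hb
    rw [← hxxk]
    exact congrFun this k
  -- injectivity as separation
  have hinj : ∀ b : B, (∀ k, f k b = 0) → b = 0 := by
    intro b hb
    apply hbij.1
    apply Subtype.ext
    funext k
    simp [hb k]
  -- kernels are antitone
  have hker_anti : ∀ k l, k ≤ l → RingHom.ker (f l) ≤ RingHom.ker (f k) := by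
    intro k l hkl
    induction l, hkl using Nat.le_induction with
    | base => exact le_refl _
    | succ l hkl ih =>
      refine le_trans ?_ ih
      intro b hb
      rw [RingHom.mem_ker] at hb ⊢
      rw [← hcompat l]
      simp [hb]
  set J1 : Ideal B := RingHom.ker (f 1) with hJ1def
  have hJ1open : IsOpen (J1 : Set B) := hker_open 1
  -- powers of J1 tend to zero
  have hnil : ∀ k, ∃ N, 0 < N ∧ J1 ^ N ≤ RingHom.ker (f k) := by
    intro k
    induction k with
    | zero => exact ⟨1, Nat.one_pos, by rw [pow_one]; exact hker_anti 0 1 (by omega)⟩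
    | succ k ih =>
      obtain ⟨N, hNpos, hN⟩ := ih
      obtain ⟨m, hm⟩ := hgnil k
      have hmap : Ideal.map (f (k + 1)) (RingHom.ker (f k)) ≤ RingHom.ker (g k) := by
        rw [Ideal.map_le_iff_le_comap]
        intro b hb
        rw [Ideal.mem_comap, RingHom.mem_ker]
        rw [RingHom.mem_ker] at hb
        have := DFunLike.congr_fun (hcompat k) b
        simp only [RingHom.coe_comp, Function.comp_apply] at this
        rw [this, hb]
      have hker_pow : (RingHom.ker (f k)) ^ m ≤ RingHom.ker (f (k + 1)) := by
        have h1 : Ideal.map (f (k + 1)) ((RingHom.ker (f k)) ^ m) ≤ ⊥ := by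
          rw [Ideal.map_pow]
          calc (Ideal.map (f (k + 1)) (RingHom.ker (f k))) ^ m
              ≤ (RingHom.ker (g k)) ^ m := Ideal.pow_right_mono hmap m
            _ = ⊥ := hm
        rw [Ideal.map_le_iff_le_comap] at h1
        intro b hb
        exact h1 hb
      refine ⟨N * m + 1, by omega, ?_⟩
      calc J1 ^ (N * m + 1) ≤ J1 ^ (N * m) := Ideal.pow_le_pow_right (by omega)
        _ = (J1 ^ N) ^ m := by rw [← pow_mul]
        _ ≤ (RingHom.ker (f k)) ^ m := Ideal.pow_right_mono hN m
        _ ≤ RingHom.ker (f (k + 1)) := hker_pow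
  have hJ1pow : ∀ s ∈ nhds (0 : B), ∃ n, ((J1 ^ n : Ideal B) : Set B) ⊆ s := by
    intro s hs
    obtain ⟨k, hk⟩ := hker_cof s hs
    obtain ⟨N, _, hN⟩ := hnil k
    exact ⟨N, le_trans hN hk⟩
  -- the closure filtration
  set clOf : ℕ → Ideal B := fun n => (J1 ^ n).topologicalClosure with hclOfdef
  have hclOf_coe : ∀ n, (clOf n : Set B) = closure ((J1 ^ n : Ideal B) : Set B) := fun n =>
    Submodule.topologicalClosure_coe _
  have hclOf_open : ∀ n, IsOpen (clOf n : Set B) := by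
    intro n
    rw [hclOf_coe]
    exact hclos J1 hJ1open hJ1pow n
  have hclOf_anti : ∀ {a b : ℕ}, a ≤ b → clOf b ≤ clOf a := by
    intro a b hab
    exact Submodule.topologicalClosure_mono (Ideal.pow_le_pow_right hab)
  have hpow_le_cl : ∀ n, J1 ^ n ≤ clOf n := fun n => Submodule.le_topologicalClosure _
  have hcl_mul : ∀ a b, clOf a * clOf b ≤ clOf (a + b) := by
    intro a b
    refine le_trans (closure_mul_le _ _) ?_
    rw [hclOfdef]
    simp only [← pow_add]
    exact le_refl _
  have hcl_cofinal : ∀ s ∈ nhds (0 : B), ∃ n, (clOf n : Set B) ⊆ s := by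
    intro s hs
    obtain ⟨n, hn⟩ := hcl_cof J1 hJ1pow s hs
    refine ⟨n, ?_⟩
    rw [hclOf_coe]
    exact hn
  -- separation
  have hsep : ∀ b : B, (∀ n, b ∈ clOf n) → b = 0 := by
    intro b hb
    apply hinj
    intro k
    obtain ⟨n, hn⟩ := hcl_cofinal (RingHom.ker (f k) : Set B)
      ((hker_open k).mem_nhds (Submodule.zero_mem _))
    exact hn (hb n)
  -- completeness
  have hcompl : ∀ a : ℕ → B, (∀ n, a (n + 1) - a n ∈ clOf n) → ∃ b, ∀ n, b - a n ∈ clOf n := by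
    intro a ha
    have htel : ∀ m n, m ≤ n → a n - a m ∈ clOf m := by
      intro m n hmn
      induction n, hmn using Nat.le_induction with
      | base => simp
      | succ n hmn ih =>
        have : a (n + 1) - a m = (a (n + 1) - a n) + (a n - a m) := by ring
        rw [this]
        exact Submodule.add_mem _ (hclOf_anti hmn (ha n)) ih
    have hnk : ∀ k, ∃ n, (clOf n : Set B) ⊆ (RingHom.ker (f k) : Set B) := fun k =>
      hcl_cofinal _ ((hker_open k).mem_nhds (Submodule.zero_mem _))
    choose nk hnk' using hnk
    set ψ : ℕ → ℕ := fun k => Nat.rec (nk 0) (fun k ψk => max (ψk + 1) (nk (k + 1))) k with hψdef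
    have hψ_mono : ∀ k, ψ k < ψ (k + 1) := by
      intro k
      show ψ k < max (ψ k + 1) (nk (k + 1))
      omega
    have hψ_le : ∀ k l, k ≤ l → ψ k ≤ ψ l := by
      intro k l hkl
      induction l, hkl using Nat.le_induction with
      | base => exact le_refl _
      | succ l hkl ih => exact le_trans ih (le_of_lt (hψ_mono l))
    have hψ_ge : ∀ k, k ≤ ψ k := by
      intro k
      induction k with
      | zero => omega
      | succ k ih =>
        have := hψ_mono k
        omega
    have hψ_nk : ∀ k, nk k ≤ ψ k := by
      intro k
      cases k with
      | zero => exact le_refl _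
      | succ k => exact le_max_right _ _
    have hcl_ker : ∀ k, clOf (ψ k) ≤ RingHom.ker (f k) := by
      intro k z hz
      exact hnk' k (hclOf_anti (hψ_nk k) hz)
    -- the compatible family
    set y : ∀ k, C k := fun k => f k (a (ψ k)) with hydef
    have hy : ∀ k, g k (y (k + 1)) = y k := by
      intro k
      have h1 : g k (f (k + 1) (a (ψ (k + 1)))) = f k (a (ψ (k + 1))) := by
        have := DFunLike.congr_fun (hcompat k) (a (ψ (k + 1)))
        simpa using this
      rw [hydef]
      simp only []
      rw [h1]
      have h2 : a (ψ (k + 1)) - a (ψ k) ∈ RingHom.ker (f k) :=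
        hcl_ker k (htel (ψ k) (ψ (k + 1)) (le_of_lt (hψ_mono k)))
      rw [RingHom.mem_ker, map_sub, sub_eq_zero] at h2
      exact h2
    obtain ⟨b, hb⟩ := hbij.2 ⟨y, hy⟩
    have hbk : ∀ k, f k b = y k := by
      intro k
      have := congrArg Subtype.val hb
      exact congrFun this k
    refine ⟨b, ?_⟩
    intro n
    obtain ⟨k0, hk0⟩ := hker_cof (clOf n : Set B) ((hclOf_open n).mem_nhds (Submodule.zero_mem _))
    set k := max k0 n with hkdef
    have h1 : b - a (ψ k) ∈ RingHom.ker (f k) := by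
      rw [RingHom.mem_ker, map_sub, hbk k, sub_self]
    have h2 : (RingHom.ker (f k) : Set B) ⊆ (clOf n : Set B) :=
      le_trans (hker_anti k0 k (le_max_left _ _)) hk0
    have h3 : a (ψ k) - a n ∈ clOf n := htel n (ψ k) (le_trans (le_max_right k0 n) (hψ_ge k))
    have : b - a n = (b - a (ψ k)) + (a (ψ k) - a n) := by ring
    rw [this]
    exact Submodule.add_mem _ (h2 h1) h3
  -- generators of J1 modulo clOf 2
  obtain ⟨k2, hk2⟩ := hker_cof (clOf 2 : Set B) ((hclOf_open 2).mem_nhds (Submodule.zero_mem _))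
  set K : Ideal B := RingHom.ker (f k2) with hKdef
  have hKcl : K ≤ clOf 2 := hk2
  haveI hCk2 := hCnoeth k2
  have hBK_noeth : IsNoetherianRing (B ⧸ K) :=
    isNoetherianRing_of_ringEquiv (C k2) (RingHom.quotientKerEquivOfSurjective (hsurj k2)).symm
  have hJ1K_fg : (Ideal.map (Ideal.Quotient.mk K) J1).FG :=
    (isNoetherianRing_iff_ideal_fg _).1 hBK_noeth _
  obtain ⟨Tb, hTb⟩ := hJ1K_fg
  have hTlift : ∀ t : {t // t ∈ Tb}, ∃ b ∈ J1, Ideal.Quotient.mk K b = (t : B ⧸ K) := by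
    intro t
    have ht : (t : B ⧸ K) ∈ Ideal.map (Ideal.Quotient.mk K) J1 := by
      rw [← hTb]
      exact Ideal.subset_span t.2
    obtain ⟨b, hb1, hb2⟩ := Ideal.mem_image_of_mem_map_of_surjective _
      Ideal.Quotient.mk_surjective ht
    exact ⟨b, hb1, hb2⟩
  choose xf hxfJ1 hxfmk using hTlift
  -- reindex along Fin r
  classical
  set r : ℕ := Fintype.card {t // t ∈ Tb} with hrdef
  set er : {t // t ∈ Tb} ≃ Fin r := Fintype.equivFin _ with herdef
  set x : Fin r → B := fun i => xf (er.symm i) with hxdef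
  set Ix : Ideal B := Ideal.span (Set.range x) with hIxdef
  have hxJ1 : ∀ i, x i ∈ J1 := fun i => hxfJ1 _
  have hIxJ1 : Ix ≤ J1 := by
    rw [hIxdef, Ideal.span_le]
    rintro _ ⟨i, rfl⟩
    exact hxJ1 i
  have hrange : Set.range x = Set.range xf := by
    rw [hxdef]
    exact Function.Surjective.range_comp er.symm.surjective xf
  have hIx_le_cl : ∀ n, Ix ^ n ≤ clOf n := fun n =>
    le_trans (Ideal.pow_right_mono hIxJ1 n) (hpow_le_cl n)
  have hJ1dec : J1 ≤ Ix ⊔ clOf 2 := by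
    intro z hz
    have hmz : Ideal.Quotient.mk K z ∈ Ideal.span (↑Tb : Set (B ⧸ K)) := by
      rw [hTb]
      exact Ideal.mem_map_of_mem _ hz
    have hTb_range : (↑Tb : Set (B ⧸ K))
        = Set.range (fun t : {t // t ∈ Tb} => (t : B ⧸ K)) := by
      ext u
      constructor
      · intro h
        exact ⟨⟨u, h⟩, rfl⟩
      · rintro ⟨t, rfl⟩
        exact t.2
    rw [hTb_range] at hmz
    obtain ⟨c, hc⟩ := (Submodule.mem_span_range_iff_exists_fun _).1 hmz
    set cl : {t // t ∈ Tb} → B :=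
      fun t => Function.surjInv Ideal.Quotient.mk_surjective (c t) with hcldef
    have hz2 : Ideal.Quotient.mk K (z - ∑ t, cl t * xf t) = 0 := by
      rw [map_sub, map_sum]
      have : ∀ t ∈ Finset.univ, Ideal.Quotient.mk K (cl t * xf t)
          = c t • (t : B ⧸ K) := by
        intro t _
        rw [map_mul, hcldef]
        simp only [Function.surjInv_eq]
        rw [hxfmk t, smul_eq_mul]
      rw [Finset.sum_congr rfl this, hc, sub_self]
    have hzsum : z - ∑ t, cl t * xf t ∈ K := Ideal.Quotient.eq_zero_iff_mem.1 hz2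
    have hsum_mem : (∑ t, cl t * xf t) ∈ Ix := by
      apply Submodule.sum_mem
      intro t _
      apply Ideal.mul_mem_left
      apply Submodule.subset_span
      rw [hrange]
      exact ⟨t, rfl⟩
    have hzz : z = (∑ t, cl t * xf t) + (z - ∑ t, cl t * xf t) := by ring
    rw [hzz]
    exact Submodule.add_mem_sup hsum_mem (hKcl hzsum)
  have hJpow : ∀ m, J1 ^ m ≤ Ix ^ m ⊔ clOf (m + 1) := by
    intro m
    induction m with
    | zero =>
      rw [pow_zero, pow_zero]
      exact le_sup_left
    | succ m ih =>
      have h1 : J1 ^ (m + 1) ≤ (Ix ^ m ⊔ clOf (m + 1)) * (Ix ⊔ clOf 2) := by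
        rw [pow_succ]
        exact Ideal.mul_mono ih hJ1dec
      refine le_trans h1 ?_
      rw [Ideal.sup_mul, Ideal.mul_sup, Ideal.mul_sup]
      have c1 : Ix ^ m * Ix ≤ Ix ^ (m + 1) ⊔ clOf (m + 2) := by
        rw [← pow_succ]
        exact le_sup_left
      have c2 : Ix ^ m * clOf 2 ≤ Ix ^ (m + 1) ⊔ clOf (m + 2) := by
        refine le_trans ?_ le_sup_right
        exact le_trans (Ideal.mul_mono_left (hIx_le_cl m)) (hcl_mul m 2)
      have c3 : clOf (m + 1) * Ix ≤ Ix ^ (m + 1) ⊔ clOf (m + 2) := by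
        refine le_trans ?_ le_sup_right
        have hIxcl1 : Ix ≤ clOf 1 := by
          refine le_trans hIxJ1 ?_
          have := hpow_le_cl 1
          rwa [pow_one] at this
        exact le_trans (Ideal.mul_mono_right hIxcl1) (hcl_mul (m + 1) 1)
      have c4 : clOf (m + 1) * clOf 2 ≤ Ix ^ (m + 1) ⊔ clOf (m + 2) := by
        refine le_trans ?_ le_sup_right
        refine le_trans (hcl_mul (m + 1) 2) ?_
        exact hclOf_anti (by omega)
      exact sup_le (sup_le c1 c2) (sup_le c3 c4)
  have hclOf_step : ∀ m, clOf m ≤ Ix ^ m ⊔ clOf (m + 1) := by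
    intro m
    have h1 : clOf m ≤ J1 ^ m ⊔ clOf (m + 1) :=
      closure_le_sup (J1 ^ m) (clOf (m + 1)) (hclOf_open (m + 1))
    exact le_trans h1 (sup_le (hJpow m) le_sup_right)
  -- the key identity:  clOf n = Ix ^ n
  have hcl_eq : ∀ n, clOf n = Ix ^ n := by
    intro n
    refine le_antisymm ?_ (hIx_le_cl n)
    have hstepS : ∀ k', ∀ z ∈ ((clOf (n + k') : Ideal B) : Set B),
        ∃ c : (Fin n → Fin r) → B, (∀ w, c w ∈ clOf (k' - 0)) ∧
        (z - ∑ w, c w * (∏ j, x (w j))) ∈ ((clOf (n + (k' + 1)) : Ideal B) : Set B) := by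
      intro k' z hz
      have h1 : z ∈ Ix ^ (n + k') ⊔ clOf (n + k' + 1) := hclOf_step (n + k') hz
      obtain ⟨u, hu, v, hv, huv⟩ := Submodule.mem_sup.1 h1
      have hu2 : u ∈ (Ix ^ k') •
          Ideal.span (Set.range fun w : Fin n → Fin r => ∏ j, x (w j)) := by
        rw [Ideal.smul_eq_mul, ← pow_eq_span_words, ← pow_add]
        rwa [Nat.add_comm k' n]
      obtain ⟨a, ha, hasum⟩ := (Submodule.mem_ideal_smul_span_iff_exists_sum _ _ _).1 hu2
      refine ⟨fun w => a w, ?_, ?_⟩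
      · intro w
        exact hIx_le_cl k' (ha w)
      · have hsum : (∑ w, a w * (∏ j, x (w j))) = u := by
          rw [← hasum, Finsupp.sum_fintype]
          · apply Finset.sum_congr rfl
            intro w _
            rw [smul_eq_mul]
          · intro w
            rw [zero_smul]
        rw [hsum]
        have : z - u = v := by rw [← huv]; ring
        rw [this]
        exact hv
    have happ := sum_approx clOf hsep hcompl
      (fun w : Fin n → Fin r => ∏ j, x (w j)) 0
      (fun k' => ((clOf (n + k') : Ideal B) : Set B))
      (fun k' z hz => hclOf_anti (by omega) hz)
      hstepS
    intro z hz
    have hz0 : z ∈ ((clOf (n + 0) : Ideal B) : Set B) := hz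
    have hsp : Ideal.span (Set.range fun w : Fin n → Fin r => ∏ j, x (w j)) ≤ Ix ^ n := by
      rw [Ideal.span_le]
      rintro _ ⟨w, rfl⟩
      exact word_mem_pow x n w
    exact hsp (happ z hz0)
  have hcl1_J1 : clOf 1 = J1 := by
    apply le_antisymm
    · exact Submodule.topologicalClosure_minimal _ (le_of_eq (pow_one J1))
        (idl_closed_of_open J1 hJ1open)
    · exact le_trans (le_of_eq (pow_one J1).symm) (hpow_le_cl 1)
  have hJ1_eq : J1 = Ix := by
    have h1 : clOf 1 = Ix ^ 1 := hcl_eq 1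
    rw [pow_one] at h1
    rw [← hcl1_J1, h1]
  constructor
  · -- Noetherian
    have hBJ1 : IsNoetherianRing (B ⧸ J1) := by
      haveI := hCnoeth 1
      exact isNoetherianRing_of_ringEquiv (C 1)
        (RingHom.quotientKerEquivOfSurjective (hsurj 1)).symm
    have hBIx : IsNoetherianRing (B ⧸ Ix) := by
      rw [← hJ1_eq]
      exact hBJ1
    refine noeth_of_complete x clOf ?_ ?_ hsep hcompl
    · rw [← hIxdef]
      exact hBIx
    · intro n
      rw [← hIxdef]
      exact hIx_le_cl n
  · -- adic
    refine ⟨Ix, isAdic_iff.2 ⟨?_, ?_⟩⟩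
    · intro n
      have : (clOf n : Set B) = ((Ix ^ n : Ideal B) : Set B) := by rw [hcl_eq n]
      rw [← this]
      exact hclOf_open n
    · intro s hs
      obtain ⟨n, hn⟩ := hcl_cofinal s hs
      refine ⟨n, ?_⟩
      have : (clOf n : Set B) = ((Ix ^ n : Ideal B) : Set B) := by rw [hcl_eq n]
      rw [← this]
      exact hn
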